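/- arXiv:2510.02756 — 5 statements merged into one kernel-verified Lean document; each statement's English description precedes it below -/
import Mathlib

section
/- There exists a group isomorphism between the symmetric group S₆ on six letters and the symplectic group Sp₄(F₂) of 4×4 matrices over the field with two elements preserving the standard nondegenerate alternating bilinear form. (In particular GSp₄(F₂) = Sp₄(F₂) is isomorphic to S₆, the identification used to analyse the mod-2 Galois representation of the Jacobian of a genus two curve via its Weierstrass points.) -/
/-
We construct an explicit injective group homomorphism `S₆ → Sp₄(𝔽₂)` coming from the
permutation action of `S₆` on the 4-dimensional quotient `V = {x ∈ 𝔽₂⁶ : Σx = 0}/⟨(1,…,1)⟩`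
endowed with the symplectic form induced by the standard dot product, written in an explicit
symplectic basis.  A counting argument (kernel computation) shows `|Sp₄(𝔽₂)| ≤ 720`, whence
the homomorphism is an isomorphism.
-/

namespace S6Sp4

open Finset Matrix

abbrev I2 := Fin 2 ⊕ Fin 2

/-- coordinates of the class of `e_a + e_5` in the chosen symplectic basis of `V` -/
def u : Fin 6 → I2 → ZMod 2 :=
  ![Sum.elim ![1,0] ![0,0], Sum.elim ![0,0] ![1,0], Sum.elim ![1,0] ![1,1],
    Sum.elim ![1,1] ![1,1], Sum.elim ![1,1] ![1,0], Sum.elim ![0,0] ![0,0]]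

/-- expansion of the symplectic basis vectors in terms of the classes of `e_a + e_5` -/
def S : I2 → Fin 6 → ZMod 2 :=
  Sum.elim ![![1,0,0,0,0,1], ![0,0,1,1,0,0]] ![![0,1,0,0,0,1], ![1,1,1,0,0,1]]

/-- the coordinates of the image of the `i`-th basis vector under the action of `σ` -/
def col (σ : Equiv.Perm (Fin 6)) (i j : I2) : ZMod 2 := ∑ a, S i a * u (σ a) j

/-- the matrix of the action of `σ` on `V` in the chosen symplectic basis -/
def M (σ : Equiv.Perm (Fin 6)) : Matrix I2 I2 (ZMod 2) := Matrix.of fun j i => col σ i j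

theorem usum (j : I2) : ∑ a, u a j = 0 := by revert j; decide

theorem Ssum (i : I2) : ∑ a, S i a = 0 := by revert i; decide

theorem key (x : Fin 6 → ZMod 2) (hx : ∑ b, x b = 0) (a : Fin 6) :
    ∑ b, (∑ k, u a k * S k b) * x b = x a + x 5 := by revert x a; decide

theorem star (σ : Equiv.Perm (Fin 6)) (a : Fin 6) (j : I2) :
    ∑ k, u a k * col σ k j = u (σ a) j + u (σ 5) j := by
  have h6 : ∑ b, u (σ b) j = 0 := by
    rw [Equiv.sum_comp σ (fun b => u b j)]; exact usum j
  calc ∑ k, u a k * col σ k j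
      = ∑ k, ∑ b, u a k * (S k b * u (σ b) j) := by simp [col, Finset.mul_sum]
    _ = ∑ b, (∑ k, u a k * S k b) * u (σ b) j := by
        rw [Finset.sum_comm]
        exact Finset.sum_congr rfl fun b _ => by
          rw [Finset.sum_mul]
          exact Finset.sum_congr rfl fun k _ => by ring
    _ = u (σ a) j + u (σ 5) j := key _ h6 a

theorem M_one : M 1 = 1 := by
  have h : ∀ i j : I2, ∑ a, S i a * u a j = if j = i then (1 : ZMod 2) else 0 := by decide
  ext j i
  simp only [M, Matrix.of_apply, col, Equiv.Perm.one_apply, Matrix.one_apply]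
  exact h i j

theorem M_mul (σ τ : Equiv.Perm (Fin 6)) : M (σ * τ) = M σ * M τ := by
  ext j i
  rw [Matrix.mul_apply]
  simp only [M, Matrix.of_apply]
  calc col (σ * τ) i j
      = ∑ a, S i a * u (σ (τ a)) j := by
        simp [col, Equiv.Perm.mul_apply]
    _ = ∑ a, S i a * (u (σ (τ a)) j + u (σ 5) j) + (∑ a, S i a) * u (σ 5) j := by
        have l1 : ∀ s x y : ZMod 2, s * x = s * (x + y) + s * y := by decide
        rw [Finset.sum_mul, ← Finset.sum_add_distrib]
        exact Finset.sum_congr rfl fun a _ => l1 _ _ _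
    _ = ∑ a, S i a * ∑ k, u (τ a) k * col σ k j := by
        rw [Ssum, zero_mul, add_zero]
        exact Finset.sum_congr rfl fun a _ => by rw [star]
    _ = ∑ a, ∑ k, col σ k j * (S i a * u (τ a) k) := by
        refine Finset.sum_congr rfl fun a _ => ?_
        rw [Finset.mul_sum]
        exact Finset.sum_congr rfl fun k _ => by ring
    _ = ∑ k, ∑ a, col σ k j * (S i a * u (τ a) k) := Finset.sum_comm
    _ = ∑ k, col σ k j * col τ i k := by
        exact Finset.sum_congr rfl fun k _ => (Finset.mul_sum _ _ _).symm

theorem M_inj (σ : Equiv.Perm (Fin 6)) (h : M σ = 1) : σ = 1 := by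
  have hcol : ∀ i j : I2, col σ i j = if j = i then 1 else 0 := by
    intro i j
    have := congrFun (congrFun h j) i
    simpa [M, Matrix.one_apply] using this
  have hstar : ∀ (a : Fin 6) (j : I2), u (σ a) j = u a j + u (σ 5) j := by
    intro a j
    have h1 := star σ a j
    rw [Finset.sum_congr rfl (fun k _ => by rw [hcol k j])] at h1
    simp only [mul_ite, mul_one, mul_zero, Finset.sum_ite_eq] at h1
    simp only [Finset.mem_univ, if_true] at h1
    have h2 : ∀ x y z : ZMod 2, z = x + y → x = z + y := by decide
    exact h2 _ _ _ h1
  have key2 : ∀ c : Fin 6, (∀ a : Fin 6, ∃ b : Fin 6, ∀ j : I2, u b j = u a j + u c j) →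
      c = 5 := by decide
  have hc5 : σ 5 = 5 := key2 (σ 5) (fun a => ⟨σ a, fun j => hstar a j⟩)
  have uinj : ∀ a b : Fin 6, (∀ j : I2, u a j = u b j) → a = b := by decide
  have u5 : ∀ j : I2, u 5 j = 0 := by decide
  apply Equiv.ext
  intro a
  apply uinj
  intro j
  rw [hstar a j, hc5, u5, add_zero]
  rfl

/-- the symplectic pairing computed on the `u` vectors -/
def Bf (x y : Fin 6) : ZMod 2 := ∑ k, ∑ l, u x k * Matrix.J (Fin 2) (ZMod 2) k l * u y l

theorem Bfu : ∀ x y : Fin 6, Bf x y =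
    (if x = y then 1 else 0) + (if x = 5 then 1 else 0) + (if y = 5 then 1 else 0) + 1 := by
  decide

theorem SJS : ∀ i j : I2, ∑ a, S i a * S j a = Matrix.J (Fin 2) (ZMod 2) i j := by
  intro i j; rcases i with i | i <;> rcases j with j | j <;> fin_cases i <;> fin_cases j <;> decide

theorem M_sp (σ : Equiv.Perm (Fin 6)) : M σ ∈ Matrix.symplecticGroup (Fin 2) (ZMod 2) := by
  rw [SymplecticGroup.mem_iff']
  ext i j
  have hw : ∀ a b : Fin 6,
      ∑ l, (∑ k, u a k * Matrix.J (Fin 2) (ZMod 2) k l) * u b l = Bf a b := by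
    intro a b
    rw [Bf, Finset.sum_comm]
    exact Finset.sum_congr rfl fun l _ => Finset.sum_mul _ _ _
  calc ((M σ)ᵀ * Matrix.J (Fin 2) (ZMod 2) * M σ) i j
      = ∑ l, (∑ k, col σ i k * Matrix.J (Fin 2) (ZMod 2) k l) * col σ j l := by
        rw [Matrix.mul_apply]
        exact Finset.sum_congr rfl fun l _ => by rw [Matrix.mul_apply]; rfl
    _ = ∑ l, (∑ a, S i a * ∑ k, u (σ a) k * Matrix.J (Fin 2) (ZMod 2) k l) *
          (∑ b, S j b * u (σ b) l) := by
        refine Finset.sum_congr rfl fun l _ => ?_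
        congr 1
        calc ∑ k, col σ i k * Matrix.J (Fin 2) (ZMod 2) k l
            = ∑ k, ∑ a, S i a * (u (σ a) k * Matrix.J (Fin 2) (ZMod 2) k l) := by
              refine Finset.sum_congr rfl fun k _ => ?_
              rw [col, Finset.sum_mul]
              exact Finset.sum_congr rfl fun a _ => by ring
          _ = ∑ a, S i a * ∑ k, u (σ a) k * Matrix.J (Fin 2) (ZMod 2) k l := by
              rw [Finset.sum_comm]
              exact Finset.sum_congr rfl fun a _ => (Finset.mul_sum _ _ _).symm
    _ = ∑ l, ∑ a, ∑ b, (S i a * ∑ k, u (σ a) k * Matrix.J (Fin 2) (ZMod 2) k l) *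
          (S j b * u (σ b) l) := by
        exact Finset.sum_congr rfl fun l _ => Finset.sum_mul_sum _ _ _ _
    _ = ∑ a, ∑ b, ∑ l, (S i a * ∑ k, u (σ a) k * Matrix.J (Fin 2) (ZMod 2) k l) *
          (S j b * u (σ b) l) := by
        rw [Finset.sum_comm]
        exact Finset.sum_congr rfl fun a _ => Finset.sum_comm
    _ = ∑ a, ∑ b, (S i a * S j b) * Bf (σ a) (σ b) := by
        refine Finset.sum_congr rfl fun a _ => Finset.sum_congr rfl fun b _ => ?_
        rw [← hw (σ a) (σ b), Finset.mul_sum]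
        exact Finset.sum_congr rfl fun l _ => by ring
    _ = Matrix.J (Fin 2) (ZMod 2) i j := by
        have expand : ∀ a : Fin 6, ∑ b, (S i a * S j b) * Bf (σ a) (σ b)
            = S i a * S j a + S i a * S j (σ.symm 5) := by
          intro a
          have hterm : ∀ b : Fin 6, (S i a * S j b) * Bf (σ a) (σ b)
              = (S i a * S j b) * (if a = b then 1 else 0)
                + ((S i a * S j b) * (if a = σ.symm 5 then 1 else 0)
                + ((S i a * S j b) * (if b = σ.symm 5 then 1 else 0)
                + S i a * S j b)) := by
            intro b
            rw [Bfu (σ a) (σ b)]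
            simp only [Equiv.apply_eq_iff_eq, Equiv.apply_eq_iff_eq_symm_apply,
              Equiv.symm_apply_apply]
            ring
          rw [Finset.sum_congr rfl fun b _ => hterm b]
          rw [Finset.sum_add_distrib, Finset.sum_add_distrib, Finset.sum_add_distrib]
          have e1 : ∑ b, (S i a * S j b) * (if a = b then 1 else 0) = S i a * S j a := by
            simp [mul_ite, Finset.sum_ite_eq]
          have e2 : ∑ b, (S i a * S j b) * (if a = σ.symm 5 then 1 else 0)
              = (S i a * (if a = σ.symm 5 then 1 else 0)) * ∑ b, S j b := by
            rw [Finset.mul_sum]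
            exact Finset.sum_congr rfl fun b _ => by ring
          have e3 : ∑ b, (S i a * S j b) * (if b = σ.symm 5 then 1 else 0)
              = S i a * S j (σ.symm 5) := by
            simp [mul_ite, Finset.sum_ite_eq']
          have e4 : ∑ b, S i a * S j b = S i a * ∑ b, S j b := (Finset.mul_sum _ _ _).symm
          rw [e1, e2, e3, e4, Ssum j, mul_zero, mul_zero, add_zero, zero_add]
        rw [Finset.sum_congr rfl fun a _ => expand a]
        rw [Finset.sum_add_distrib]
        have f2 : ∑ a, S i a * S j (σ.symm 5) = (∑ a, S i a) * S j (σ.symm 5) :=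
          (Finset.sum_mul _ _ _).symm
        rw [SJS i j, f2, Ssum i, zero_mul, add_zero]

/-- the homomorphism `S₆ →* Sp₄(𝔽₂)` -/
def Φ : Equiv.Perm (Fin 6) →* Matrix.symplecticGroup (Fin 2) (ZMod 2) where
  toFun σ := ⟨M σ, M_sp σ⟩
  map_one' := Subtype.ext M_one
  map_mul' σ τ := Subtype.ext (M_mul σ τ)

theorem Φ_inj : Function.Injective Φ := by
  rw [injective_iff_map_eq_one]
  intro σ h
  exact M_inj σ (congrArg Subtype.val h)

/-! ### Counting: `|Sp₄(𝔽₂)| ≤ 720` -/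

/-- The symplectic pairing of two vectors in `𝔽₂⁴` encoded as 4-bit numbers,
computed via a 256-bit lookup table. -/
def Bn (v w : Nat) : Nat :=
  47758934893924062158176435002117040092568497630997252033787331798189963476992 >>>
    (v * 16 + w) % 2

/-- `n < 2^16` encodes a `4 × 4` matrix over `𝔽₂`; `check` tests that its rows form a
symplectic basis. -/
def check (n : Nat) : Bool :=
  Bn (n % 16) (n / 16 % 16) == 0 && (Bn (n % 16) (n / 256 % 16) == 1 &&
  (Bn (n % 16) (n / 4096 % 16) == 0 && (Bn (n / 16 % 16) (n / 256 % 16) == 0 &&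
  (Bn (n / 16 % 16) (n / 4096 % 16) == 1 && Bn (n / 256 % 16) (n / 4096 % 16) == 0))))

/-- count the `n ∈ [a, a + 2^fuel)` with `f n = true`, by binary splitting -/
def cnt (f : Nat → Bool) : Nat → Nat → Nat
  | 0, a => if f a then 1 else 0
  | fuel+1, a => cnt f fuel a + cnt f fuel (a + 2^fuel)

theorem cnt_card (f : Nat → Bool) : ∀ (fuel a : Nat),
    ((Finset.Ico a (a + 2^fuel)).filter (fun n => f n = true)).card = cnt f fuel a
  | 0, a => by
    simp [cnt, Nat.Ico_succ_singleton, Finset.filter_singleton, apply_ite Finset.card]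
  | fuel+1, a => by
    have h1 := cnt_card f fuel a
    have h2 := cnt_card f fuel (a + 2^fuel)
    have hpow : a + 2^(fuel+1) = (a + 2^fuel) + 2^fuel := by rw [pow_succ]; omega
    rw [cnt, hpow, ← Finset.Ico_union_Ico_eq_Ico (Nat.le_add_right a _) (Nat.le_add_right _ _),
      Finset.filter_union,
      Finset.card_union_of_disjoint
        (Finset.disjoint_filter_filter (Finset.Ico_disjoint_Ico_consecutive a _ _)),
      h1, h2]

set_option maxRecDepth 10000 in
set_option maxHeartbeats 16000000 in
theorem count720 : cnt check 16 0 = 720 := by decide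

def encRow (v : I2 → ZMod 2) : Nat :=
  (v (.inl 0)).val + 2 * (v (.inl 1)).val + 4 * (v (.inr 0)).val + 8 * (v (.inr 1)).val

def enc (A : Matrix I2 I2 (ZMod 2)) : Nat :=
  encRow (A (.inl 0)) + 16 * encRow (A (.inl 1)) + 256 * encRow (A (.inr 0))
    + 4096 * encRow (A (.inr 1))

theorem encRow_lt (v : I2 → ZMod 2) : encRow v < 16 := by
  have h : ∀ x : ZMod 2, x.val < 2 := by decide
  have h1 := h (v (.inl 0)); have h2 := h (v (.inl 1))
  have h3 := h (v (.inr 0)); have h4 := h (v (.inr 1))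
  unfold encRow; omega

theorem encRow_inj : ∀ v w : I2 → ZMod 2, encRow v = encRow w → v = w := by decide

theorem BnRow (v w : I2 → ZMod 2) : Bn (encRow v) (encRow w) =
    (v (.inl 0) * w (.inr 0) + v (.inl 1) * w (.inr 1) + v (.inr 0) * w (.inl 0)
      + v (.inr 1) * w (.inl 1)).val := by
  revert v w; decide

theorem entryB (A : Matrix I2 I2 (ZMod 2)) (i j : I2) :
    (A * Matrix.J (Fin 2) (ZMod 2) * Aᵀ) i j =
      A i (.inl 0) * A j (.inr 0) + A i (.inl 1) * A j (.inr 1)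
        + A i (.inr 0) * A j (.inl 0) + A i (.inr 1) * A j (.inl 1) := by
  simp [Matrix.mul_apply, Matrix.transpose_apply, Fintype.sum_sum_type, Fin.sum_univ_two,
    Matrix.J, Matrix.fromBlocks, Matrix.one_apply]
  have hneg : ∀ x : ZMod 2, -x = x := by decide
  ring

theorem enc_digits (A : Matrix I2 I2 (ZMod 2)) :
    enc A % 16 = encRow (A (.inl 0)) ∧ enc A / 16 % 16 = encRow (A (.inl 1)) ∧
    enc A / 256 % 16 = encRow (A (.inr 0)) ∧ enc A / 4096 % 16 = encRow (A (.inr 1)) ∧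
    enc A < 65536 := by
  have h1 := encRow_lt (A (.inl 0)); have h2 := encRow_lt (A (.inl 1))
  have h3 := encRow_lt (A (.inr 0)); have h4 := encRow_lt (A (.inr 1))
  unfold enc; omega

theorem enc_inj (A B : Matrix I2 I2 (ZMod 2)) (h : enc A = enc B) : A = B := by
  obtain ⟨a1, a2, a3, a4, a5⟩ := enc_digits A
  obtain ⟨b1, b2, b3, b4, b5⟩ := enc_digits B
  have e1 : encRow (A (.inl 0)) = encRow (B (.inl 0)) := by rw [← a1, ← b1, h]
  have e2 : encRow (A (.inl 1)) = encRow (B (.inl 1)) := by rw [← a2, ← b2, h]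
  have e3 : encRow (A (.inr 0)) = encRow (B (.inr 0)) := by rw [← a3, ← b3, h]
  have e4 : encRow (A (.inr 1)) = encRow (B (.inr 1)) := by rw [← a4, ← b4, h]
  funext i j
  have hrow : ∀ i : I2, A i = B i := by
    intro i
    rcases i with x | x <;> fin_cases x
    · exact encRow_inj _ _ e1
    · exact encRow_inj _ _ e2
    · exact encRow_inj _ _ e3
    · exact encRow_inj _ _ e4
  rw [hrow i]

theorem check_of_mem (A : Matrix I2 I2 (ZMod 2))
    (h : A ∈ Matrix.symplecticGroup (Fin 2) (ZMod 2)) : check (enc A) = true := by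
  rw [SymplecticGroup.mem_iff] at h
  have e : ∀ i j : I2, (A * Matrix.J (Fin 2) (ZMod 2) * Aᵀ) i j
      = Matrix.J (Fin 2) (ZMod 2) i j := fun i j => by rw [h]
  have hkey : ∀ i j : I2, Bn (encRow (A i)) (encRow (A j))
      = (Matrix.J (Fin 2) (ZMod 2) i j).val := by
    intro i j
    rw [BnRow, ← entryB, e]
  obtain ⟨d1, d2, d3, d4, _⟩ := enc_digits A
  have jv : ((Matrix.J (Fin 2) (ZMod 2) (.inl 0) (.inl 1)).val = 0)
      ∧ ((Matrix.J (Fin 2) (ZMod 2) (.inl 0) (.inr 0)).val = 1)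
      ∧ ((Matrix.J (Fin 2) (ZMod 2) (.inl 0) (.inr 1)).val = 0)
      ∧ ((Matrix.J (Fin 2) (ZMod 2) (.inl 1) (.inr 0)).val = 0)
      ∧ ((Matrix.J (Fin 2) (ZMod 2) (.inl 1) (.inr 1)).val = 1)
      ∧ ((Matrix.J (Fin 2) (ZMod 2) (.inr 0) (.inr 1)).val = 0) := by decide
  unfold check
  rw [d1, d2, d3, d4, hkey, hkey, hkey, hkey, hkey, hkey,
    jv.1, jv.2.1, jv.2.2.1, jv.2.2.2.1, jv.2.2.2.2.1, jv.2.2.2.2.2]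
  rfl

instance : DecidablePred (· ∈ Matrix.symplecticGroup (Fin 2) (ZMod 2)) :=
  fun _ => decidable_of_iff _ SymplecticGroup.mem_iff.symm

theorem card_sp_le : Fintype.card (Matrix.symplecticGroup (Fin 2) (ZMod 2)) ≤ 720 := by
  have ht : ((Finset.range 65536).filter (fun n => check n = true)).card = 720 := by
    have h0 : (65536 : ℕ) = 0 + 2^16 := by norm_num
    rw [Finset.range_eq_Ico, h0, cnt_card check 16 0, count720]
  rw [← ht, ← Finset.card_univ]
  apply Finset.card_le_card_of_injOn (fun A => enc A.val)
  · intro A _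
    rw [Finset.mem_coe, Finset.mem_filter, Finset.mem_range]
    exact ⟨(enc_digits A.val).2.2.2.2, check_of_mem A.val A.2⟩
  · intro A _ B _ hAB
    exact Subtype.ext (enc_inj _ _ hAB)

theorem card_perm6 : Fintype.card (Equiv.Perm (Fin 6)) = 720 := by
  simp [Fintype.card_perm, Fintype.card_fin]
  rfl

end S6Sp4

/-- There is a group isomorphism between the symmetric group `S₆` on six letters and the
symplectic group `Sp₄(𝔽₂)` of `4 × 4` matrices over the field with two elements preserving
the standard nondegenerate alternating bilinear form. -/
theorem stmt0 :
    Nonempty (Equiv.Perm (Fin 6) ≃* Matrix.symplecticGroup (Fin 2) (ZMod 2)) := by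
  have hcard : Fintype.card (Equiv.Perm (Fin 6))
      = Fintype.card (Matrix.symplecticGroup (Fin 2) (ZMod 2)) := by
    refine le_antisymm (Fintype.card_le_of_injective S6Sp4.Φ S6Sp4.Φ_inj) ?_
    rw [S6Sp4.card_perm6]
    exact S6Sp4.card_sp_le
  have hbij : Function.Bijective S6Sp4.Φ :=
    (Fintype.bijective_iff_injective_and_card S6Sp4.Φ).mpr ⟨S6Sp4.Φ_inj, hcard⟩
  exact ⟨MulEquiv.ofBijective S6Sp4.Φ hbij⟩
end

section
/- There exists a group isomorphism between SL₂(F₄), the special linear group of 2×2 matrices of determinant 1 over the field with four elements, and the alternating group A₅ on five letters. -/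
noncomputable section SL2F4
namespace SL2F4Aux

local instance : Fintype (GaloisField 2 2) := Fintype.ofFinite _
local instance : DecidableEq (GaloisField 2 2) := Classical.decEq _

lemma cardF : Fintype.card (GaloisField 2 2) = 4 := by
  have := GaloisField.card 2 2 (by norm_num)
  rwa [Nat.card_eq_fintype_card] at this

lemma cardGL : Nat.card (GL (Fin 2) (GaloisField 2 2)) = 180 := by
  rw [Matrix.card_GL_field, Fin.prod_univ_two, cardF]
  norm_num

lemma cardUnits : Nat.card (GaloisField 2 2)ˣ = 3 := by
  rw [Nat.card_eq_fintype_card, Fintype.card_units, cardF]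

lemma det_surj : Function.Surjective (Matrix.GeneralLinearGroup.det :
    GL (Fin 2) (GaloisField 2 2) →* (GaloisField 2 2)ˣ) := by
  intro u
  refine ⟨Matrix.GeneralLinearGroup.mkOfDetNeZero (Matrix.diagonal ![(u : GaloisField 2 2), 1]) ?_, ?_⟩
  · simp [Matrix.det_diagonal, Fin.prod_univ_two]
  · ext
    rw [Matrix.GeneralLinearGroup.val_det_apply]
    show (Matrix.diagonal ![(u : GaloisField 2 2), 1]).det = (u : GaloisField 2 2)
    simp [Matrix.det_diagonal, Fin.prod_univ_two]

/-- `SL₂(F₄)` as equiv to the kernel of `det` on `GL₂(F₄)`. -/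
def slEquivKer : Matrix.SpecialLinearGroup (Fin 2) (GaloisField 2 2) ≃
    (MonoidHom.ker (Matrix.GeneralLinearGroup.det :
      GL (Fin 2) (GaloisField 2 2) →* (GaloisField 2 2)ˣ)) where
  toFun g := ⟨Matrix.SpecialLinearGroup.toGL g, by
    rw [MonoidHom.mem_ker]
    ext
    simp [Matrix.GeneralLinearGroup.val_det_apply, Matrix.SpecialLinearGroup.toGL, g.2]⟩
  invFun A := ⟨A.1.1, by
    have h := A.2
    rw [MonoidHom.mem_ker] at h
    have h2 := congrArg Units.val h
    simpa [Matrix.GeneralLinearGroup.val_det_apply] using h2⟩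
  left_inv g := rfl
  right_inv A := by
    apply Subtype.ext
    apply Units.ext
    rfl

lemma cardSL : Nat.card (Matrix.SpecialLinearGroup (Fin 2) (GaloisField 2 2)) = 60 := by
  have h1 := Subgroup.card_eq_card_quotient_mul_card_subgroup
    (MonoidHom.ker (Matrix.GeneralLinearGroup.det :
      GL (Fin 2) (GaloisField 2 2) →* (GaloisField 2 2)ˣ))
  rw [cardGL] at h1
  have h2 : Nat.card (GL (Fin 2) (GaloisField 2 2) ⧸ MonoidHom.ker
      (Matrix.GeneralLinearGroup.det : GL (Fin 2) (GaloisField 2 2) →* (GaloisField 2 2)ˣ)) = 3 := by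
    rw [Nat.card_congr (QuotientGroup.quotientKerEquivOfSurjective _ det_surj).toEquiv, cardUnits]
  rw [h2] at h1
  rw [Nat.card_congr slEquivKer]
  omega

/-! ### The projective line over `F₄` -/

open Projectivization

lemma ne01 : (![1, 0] : Fin 2 → GaloisField 2 2) ≠ 0 := by
  intro h; exact one_ne_zero (congrFun h 0)

lemma nex1 (x : GaloisField 2 2) : (![x, 1] : Fin 2 → GaloisField 2 2) ≠ 0 := by
  intro h; exact one_ne_zero (congrFun h 1)

/-- Parametrization of the projective line by `Option F₄`. -/
def pl : Option (GaloisField 2 2) →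
    Projectivization (GaloisField 2 2) (Fin 2 → GaloisField 2 2) :=
  fun o => o.elim (mk _ ![1, 0] ne01) (fun x => mk _ ![x, 1] (nex1 x))

lemma pl_injective : Function.Injective pl := by
  rintro (_|x) (_|y) h
  · rfl
  · rcases (mk_eq_mk_iff _ _ _ _ _).1 h.symm with ⟨a, ha⟩
    have := congrFun ha 1
    simp at this
  · rcases (mk_eq_mk_iff _ _ _ _ _).1 h with ⟨a, ha⟩
    have := congrFun ha 1
    simp at this
  · rcases (mk_eq_mk_iff _ _ _ _ _).1 h with ⟨a, ha⟩
    have h1 := congrFun ha 1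
    have h0 := congrFun ha 0
    simp [Units.smul_def] at h1 h0
    rw [h1] at h0
    simp at h0
    rw [h0]

lemma pl_surjective : Function.Surjective pl := by
  intro p
  induction p using Projectivization.ind with
  | h v hv =>
    by_cases h1 : v 1 = 0
    · have h0 : v 0 ≠ 0 := by
        intro h0
        apply hv
        funext i; fin_cases i <;> assumption
      refine ⟨none, ?_⟩
      show Projectivization.mk _ ![1,0] ne01 = _
      rw [mk_eq_mk_iff']
      exact ⟨(v 0)⁻¹, by funext i; fin_cases i <;> simp [h1, inv_mul_cancel₀ h0]⟩
    · refine ⟨some (v 0 / v 1), ?_⟩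
      show Projectivization.mk _ ![v 0 / v 1, 1] (nex1 _) = _
      rw [mk_eq_mk_iff']
      exact ⟨(v 1)⁻¹, by
        funext i; fin_cases i <;>
          simp [inv_mul_cancel₀ h1, div_eq_mul_inv, mul_comm]⟩

/-- The projective line over `F₄` as an equiv with `Fin 5`. -/
def plFive : Projectivization (GaloisField 2 2) (Fin 2 → GaloisField 2 2) ≃ Fin 5 :=
  ((Equiv.ofBijective pl ⟨pl_injective, pl_surjective⟩).symm.trans
    (Fintype.equivFinOfCardEq (by simp [cardF])))

/-! ### The action of `SL₂(F₄)` on the projective line -/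

/-- The permutation of the projective line induced by an element of `SL₂(F₄)`. -/
def permOf (g : Matrix.SpecialLinearGroup (Fin 2) (GaloisField 2 2)) :
    Equiv.Perm (Projectivization (GaloisField 2 2) (Fin 2 → GaloisField 2 2)) where
  toFun := Projectivization.map (Matrix.SpecialLinearGroup.toLin' g).toLinearMap
    (Matrix.SpecialLinearGroup.toLin' g).injective
  invFun := Projectivization.map (Matrix.SpecialLinearGroup.toLin' g⁻¹).toLinearMap
    (Matrix.SpecialLinearGroup.toLin' g⁻¹).injective
  left_inv := by
    intro p
    induction p using Projectivization.ind with
    | h v hv =>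
      rw [Projectivization.map_mk, Projectivization.map_mk]
      have : (Matrix.SpecialLinearGroup.toLin' g⁻¹) ((Matrix.SpecialLinearGroup.toLin' g) v) = v := by
        rw [show (Matrix.SpecialLinearGroup.toLin' g⁻¹) ((Matrix.SpecialLinearGroup.toLin' g) v)
            = (Matrix.SpecialLinearGroup.toLin' g⁻¹ * Matrix.SpecialLinearGroup.toLin' g) v from rfl,
          ← _root_.map_mul]
        simp
      simp_rw [LinearEquiv.coe_toLinearMap, this]
  right_inv := by
    intro p
    induction p using Projectivization.ind with
    | h v hv =>
      rw [Projectivization.map_mk, Projectivization.map_mk]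
      have : (Matrix.SpecialLinearGroup.toLin' g) ((Matrix.SpecialLinearGroup.toLin' g⁻¹) v) = v := by
        rw [show (Matrix.SpecialLinearGroup.toLin' g) ((Matrix.SpecialLinearGroup.toLin' g⁻¹) v)
            = (Matrix.SpecialLinearGroup.toLin' g * Matrix.SpecialLinearGroup.toLin' g⁻¹) v from rfl,
          ← _root_.map_mul]
        simp
      simp_rw [LinearEquiv.coe_toLinearMap, this]

lemma permOf_mk (g : Matrix.SpecialLinearGroup (Fin 2) (GaloisField 2 2))
    (v : Fin 2 → GaloisField 2 2) (hv : v ≠ 0) :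
    permOf g (mk _ v hv) = mk _ (Matrix.SpecialLinearGroup.toLin' g v)
      (by simpa using (Matrix.SpecialLinearGroup.toLin' g).map_ne_zero_iff.2 hv) :=
  Projectivization.map_mk (Matrix.SpecialLinearGroup.toLin' g).toLinearMap (Matrix.SpecialLinearGroup.toLin' g).injective v hv

/-- The homomorphism from `SL₂(F₄)` to permutations of the projective line. -/
def permHom : Matrix.SpecialLinearGroup (Fin 2) (GaloisField 2 2) →*
    Equiv.Perm (Projectivization (GaloisField 2 2) (Fin 2 → GaloisField 2 2)) where
  toFun := permOf
  map_one' := by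
    ext p
    induction p using Projectivization.ind with
    | h v hv =>
      rw [show permOf 1 (mk _ v hv) = _ from permOf_mk 1 v hv]
      simp
  map_mul' g h := by
    ext p
    induction p using Projectivization.ind with
    | h v hv =>
      rw [show ((permOf (g * h)) (mk _ v hv)) = _ from permOf_mk _ v hv]
      rw [show ((permOf g * permOf h) (mk _ v hv)) = permOf g (permOf h (mk _ v hv)) from rfl]
      rw [show (permOf h (mk _ v hv)) = _ from permOf_mk _ v hv]
      rw [show (permOf g (mk _ ((Matrix.SpecialLinearGroup.toLin' h) v) _)) = _ from permOf_mk _ _ _]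
      rw [_root_.map_mul]
      rfl

lemma sq_eq_one {a : GaloisField 2 2} (h : a * a = 1) : a = 1 := by
  have h2 : (a - 1) * (a + 1) = 0 := by linear_combination h
  rcases mul_eq_zero.1 h2 with h3 | h3
  · exact sub_eq_zero.1 h3
  · have hc : (2 : GaloisField 2 2) = 0 := by exact_mod_cast CharP.cast_eq_zero (GaloisField 2 2) 2
    have : a - 1 = 0 := by linear_combination h3 - hc
    exact sub_eq_zero.1 this

lemma permHom_injective : Function.Injective permHom := by
  rw [injective_iff_map_eq_one]
  intro g hg
  have key : ∀ (v : Fin 2 → GaloisField 2 2) (hv : v ≠ 0),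
      ∃ a : (GaloisField 2 2)ˣ, (a : GaloisField 2 2) • v = (↑g : Matrix (Fin 2) (Fin 2) (GaloisField 2 2)).mulVec v := by
    intro v hv
    have h1 : permOf g (mk _ v hv) = mk _ v hv := by
      rw [show permOf g = permHom g from rfl, hg]; rfl
    rw [permOf_mk] at h1
    rcases (mk_eq_mk_iff _ _ _ _ _).1 h1 with ⟨a, ha⟩
    refine ⟨a, ?_⟩
    rw [Units.smul_def, Matrix.SpecialLinearGroup.toLin'_apply, Matrix.toLin'_apply] at ha
    exact ha
  rcases key ![1, 0] ne01 with ⟨a, ha⟩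
  rcases key ![0, 1] (by intro h; exact one_ne_zero (congrFun h 1)) with ⟨b, hb⟩
  rcases key ![1, 1] (by intro h; exact one_ne_zero (congrFun h 0)) with ⟨c, hc⟩
  have ha0 := congrFun ha 0
  have ha1 := congrFun ha 1
  have hb0 := congrFun hb 0
  have hb1 := congrFun hb 1
  have hc0 := congrFun hc 0
  have hc1 := congrFun hc 1
  simp [Matrix.mulVec, dotProduct, Fin.sum_univ_two] at ha0 ha1 hb0 hb1 hc0 hc1
  -- ha0 : ↑a = g 0 0, ha1 : 0 = g 1 0, hb0 : 0 = g 0 1, hb1 : ↑b = g 1 1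
  -- hc0 : ↑c = g 0 0 + g 0 1, hc1 : ↑c = g 1 0 + g 1 1
  have hdet := g.2
  rw [Matrix.det_fin_two] at hdet
  have hab : (a : GaloisField 2 2) = (b : GaloisField 2 2) := by
    rw [← ha0, ← hb0] at hc0
    rw [← ha1, ← hb1] at hc1
    rw [add_zero] at hc0
    rw [zero_add] at hc1
    rw [← hc0, ← hc1]
  have haa : (a : GaloisField 2 2) * a = 1 := by
    rw [← ha0, ← hb0, ← ha1, ← hb1] at hdet
    rw [← hab] at hdet
    linear_combination hdet
  have ha1' : (a : GaloisField 2 2) = 1 := sq_eq_one haa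
  apply Subtype.ext
  show (↑g : Matrix (Fin 2) (Fin 2) (GaloisField 2 2)) = 1
  ext i j
  fin_cases i <;> fin_cases j <;>
    simp [← ha0, ← ha1, ← hb0, ← hb1, ha1', ← hab, Matrix.one_apply]


/-! ### Assembly -/

/-- permCongr as MulEquiv. -/
def permCongrMul : Equiv.Perm (Projectivization (GaloisField 2 2) (Fin 2 → GaloisField 2 2)) ≃*
    Equiv.Perm (Fin 5) :=
  { Equiv.permCongr plFive with
    map_mul' := by intro x y; ext b; simp [Equiv.permCongr] }

/-- The resulting homomorphism from `SL₂(F₄)` to `Perm (Fin 5)`. -/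
def phi : Matrix.SpecialLinearGroup (Fin 2) (GaloisField 2 2) →* Equiv.Perm (Fin 5) :=
  permCongrMul.toMonoidHom.comp permHom

lemma phi_injective : Function.Injective phi :=
  fun _ _ h => permHom_injective (permCongrMul.injective h)

lemma normal_of_index_two {G : Type*} [Group G] {H : Subgroup G} (h : H.index = 2) :
    H.Normal := by
  constructor
  intro n hn g
  rw [show g * n * g⁻¹ = (g * n) * g⁻¹ from rfl,
    Subgroup.mul_mem_iff_of_index_two h, Subgroup.mul_mem_iff_of_index_two h]
  simp only [hn, iff_true, H.inv_mem_iff]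

lemma cardA5 : Nat.card (alternatingGroup (Fin 5)) = 60 := by
  rw [Nat.card_eq_fintype_card]
  have h := two_mul_card_alternatingGroup (α := Fin 5)
  rw [Fintype.card_perm, Fintype.card_fin] at h
  norm_num [Nat.factorial] at h
  have h2 : 2 * Fintype.card ↥(alternatingGroup (Fin 5)) = 120 := h
  omega

lemma cardIntUnits : Nat.card ℤˣ = 2 := by
  rw [Nat.card_eq_fintype_card]
  decide

lemma range_le_alternating : phi.range ≤ alternatingGroup (Fin 5) := by
  by_cases hall : ∀ g, Equiv.Perm.sign (phi g) = 1
  · rintro x ⟨g, rfl⟩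
    exact Equiv.Perm.mem_alternatingGroup.2 (hall g)
  · exfalso
    push_neg at hall
    obtain ⟨g₀, hg₀⟩ := hall
    have hg₀' : Equiv.Perm.sign (phi g₀) = -1 := by
      rcases Int.units_eq_one_or (Equiv.Perm.sign (phi g₀)) with h | h
      · exact absurd h hg₀
      · exact h
    set ψ := Equiv.Perm.sign.comp phi with hψ
    have hsur : Function.Surjective ψ := by
      intro u
      rcases Int.units_eq_one_or u with rfl | rfl
      · exact ⟨1, map_one ψ⟩
      · exact ⟨g₀, hg₀'⟩
    have hker : Nat.card (MonoidHom.ker ψ) = 30 := by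
      have h1 := Subgroup.card_eq_card_quotient_mul_card_subgroup (MonoidHom.ker ψ)
      rw [cardSL] at h1
      have h2 : Nat.card
          (Matrix.SpecialLinearGroup (Fin 2) (GaloisField 2 2) ⧸ MonoidHom.ker ψ) = 2 := by
        rw [Nat.card_congr (QuotientGroup.quotientKerEquivOfSurjective _ hsur).toEquiv,
          cardIntUnits]
      rw [h2] at h1
      omega
    have hKle : (MonoidHom.ker ψ).map phi ≤ alternatingGroup (Fin 5) := by
      rintro x ⟨g, hgmem, rfl⟩
      rw [Equiv.Perm.mem_alternatingGroup]
      exact hgmem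
    have hK'card : Nat.card (((MonoidHom.ker ψ).map phi).subgroupOf
        (alternatingGroup (Fin 5))) = 30 := by
      rw [Nat.card_congr (Subgroup.subgroupOfEquivOfLe hKle).toEquiv,
        Nat.card_congr (Subgroup.equivMapOfInjective _ _ phi_injective).symm.toEquiv, hker]
    have hidx : (((MonoidHom.ker ψ).map phi).subgroupOf (alternatingGroup (Fin 5))).index = 2 := by
      have h3 := Subgroup.index_mul_card
        (((MonoidHom.ker ψ).map phi).subgroupOf (alternatingGroup (Fin 5)))
      rw [hK'card, cardA5] at h3
      omega
    have hnormal := normal_of_index_two hidx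
    rcases hnormal.eq_bot_or_eq_top with h | h
    · rw [h] at hK'card
      simp at hK'card
    · rw [h] at hK'card
      rw [show Nat.card ((⊤ : Subgroup (alternatingGroup (Fin 5)))) =
        Nat.card (alternatingGroup (Fin 5)) from Nat.card_congr Subgroup.topEquiv.toEquiv,
        cardA5] at hK'card
      omega

lemma main : Nonempty (Matrix.SpecialLinearGroup (Fin 2) (GaloisField 2 2) ≃*
    alternatingGroup (Fin 5)) := by
  have hle := range_le_alternating
  have htop : phi.range.subgroupOf (alternatingGroup (Fin 5)) = ⊤ := by
    apply Subgroup.eq_top_of_card_eq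
    rw [Nat.card_congr (Subgroup.subgroupOfEquivOfLe hle).toEquiv, cardA5]
    rw [show Nat.card phi.range =
      Nat.card (Matrix.SpecialLinearGroup (Fin 2) (GaloisField 2 2)) from
      (Nat.card_congr (MonoidHom.ofInjective phi_injective).toEquiv).symm, cardSL]
  exact ⟨(MonoidHom.ofInjective phi_injective).trans
    ((Subgroup.subgroupOfEquivOfLe hle).symm.trans
      ((MulEquiv.subgroupCongr htop).trans Subgroup.topEquiv))⟩

end SL2F4Aux
end SL2F4

/-- There is a group isomorphism between `SL₂(𝔽₄)`, the special linear group of `2 × 2`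
matrices of determinant `1` over the field with four elements, and the alternating group
`A₅` on five letters. -/
theorem stmt3 :
    Nonempty (Matrix.SpecialLinearGroup (Fin 2) (GaloisField 2 2) ≃* alternatingGroup (Fin 5)) := by
  exact SL2F4Aux.main
end

section
/- Every subgroup H of the symmetric group S₆ that is isomorphic (as an abstract group) to the symmetric group S₅ either fixes a point of {1,…,6} (and is then the full stabilizer of that point) or acts transitively on {1,…,6}; moreover both cases occur, i.e. there exist both a point-stabilizer subgroup isomorphic to S₅ and a transitive subgroup of S₆ isomorphic to S₅. -/
open Equiv MulAction

/-! ### The affine subgroup of `Perm (Fin 5)` (a copy of `F₂₀`), used to build the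
exotic transitive `S₅` inside `S₆`. -/

def affP (σ : Equiv.Perm (Fin 5)) : Prop :=
  ∀ x : Fin 5, σ x = (σ 1 - σ 0) * x + σ 0

instance affP.decPred : DecidablePred affP := fun σ =>
  inferInstanceAs (Decidable (∀ x : Fin 5, σ x = (σ 1 - σ 0) * x + σ 0))

set_option maxRecDepth 40000 in
lemma affP_one : affP 1 := by decide

set_option maxRecDepth 40000 in
lemma affP_mul : ∀ a b : Equiv.Perm (Fin 5), affP a → affP b → affP (a * b) := by decide

set_option maxRecDepth 40000 in
lemma affP_inv : ∀ a : Equiv.Perm (Fin 5), affP a → affP a⁻¹ := by decide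

def affK : Subgroup (Equiv.Perm (Fin 5)) where
  carrier := setOf affP
  one_mem' := affP_one
  mul_mem' {a b} ha hb := affP_mul a b ha hb
  inv_mem' {a} ha := affP_inv a ha

lemma mem_affK {σ : Equiv.Perm (Fin 5)} : σ ∈ affK ↔ affP σ := Iff.rfl

instance : DecidablePred (· ∈ affK) := fun σ => inferInstanceAs (Decidable (affP σ))

set_option maxRecDepth 40000 in
lemma card_affK : Nat.card affK = 20 := by
  rw [Nat.card_eq_fintype_card]
  decide

set_option maxRecDepth 40000 in
lemma affK_core : ∀ g : Equiv.Perm (Fin 5),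
    (∀ h : Equiv.Perm (Fin 5), affP ((g * h)⁻¹ * h)) → g = 1 := by decide

lemma card_perm5 : Nat.card (Equiv.Perm (Fin 5)) = 120 := by
  simp [Nat.card_eq_fintype_card, Fintype.card_perm, Nat.factorial]

lemma card_perm6 : Nat.card (Equiv.Perm (Fin 6)) = 720 := by
  simp [Nat.card_eq_fintype_card, Fintype.card_perm, Nat.factorial]

lemma affK_index : affK.index = 6 := by
  have h := Subgroup.index_mul_card affK
  rw [card_affK, card_perm5] at h
  omega

abbrev Q5 := Equiv.Perm (Fin 5) ⧸ affK

lemma card_Q5 : Nat.card Q5 = 6 := affK_index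

noncomputable instance : Fintype Q5 := Fintype.ofFinite Q5

noncomputable def eQ : Q5 ≃ Fin 6 :=
  Fintype.equivFinOfCardEq (by rw [← Nat.card_eq_fintype_card, card_Q5])

/-- The exotic (transitive) embedding of `S₅` into `S₆`, via the action on the six
cosets of `affK`. -/
noncomputable def exoPhi : Equiv.Perm (Fin 5) →* Equiv.Perm (Fin 6) where
  toFun g := (eQ.symm.trans (MulAction.toPermHom (Equiv.Perm (Fin 5)) Q5 g)).trans eQ
  map_one' := by
    ext x
    simp
  map_mul' g h := by
    ext x
    simp [Equiv.trans_apply, mul_smul]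

lemma exoPhi_apply (g : Equiv.Perm (Fin 5)) (x : Fin 6) :
    exoPhi g x = eQ (g • eQ.symm x) := rfl

lemma exoPhi_injective : Function.Injective exoPhi := by
  rw [injective_iff_map_eq_one]
  intro g hg
  apply affK_core
  intro h
  have hq : g • (QuotientGroup.mk h : Q5) = QuotientGroup.mk h := by
    have := congrArg (fun σ : Equiv.Perm (Fin 6) => σ (eQ (QuotientGroup.mk h))) hg
    simpa [exoPhi_apply] using this
  rw [MulAction.Quotient.smul_mk, smul_eq_mul] at hq
  exact (QuotientGroup.eq).mp hq

lemma exoPhi_transitive : ∀ a b : Fin 6, ∃ h ∈ exoPhi.range, h a = b := by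
  intro a b
  obtain ⟨g, hg⟩ := MulAction.exists_smul_eq (Equiv.Perm (Fin 5)) (eQ.symm a) (eQ.symm b)
  refine ⟨exoPhi g, ⟨g, rfl⟩, ?_⟩
  rw [exoPhi_apply, hg]
  simp

/-! ### The standard embedding (point stabilizer). -/

instance : MulAction.IsPretransitive (Equiv.Perm (Fin 6)) (Fin 6) :=
  ⟨fun a b => ⟨Equiv.swap a b, Equiv.swap_apply_left a b⟩⟩

lemma card_stab (a : Fin 6) :
    Nat.card (MulAction.stabilizer (Equiv.Perm (Fin 6)) a) = 120 := by
  have h := Subgroup.index_mul_card (MulAction.stabilizer (Equiv.Perm (Fin 6)) a)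
  rw [MulAction.index_stabilizer_of_transitive, card_perm6] at h
  have h6 : Nat.card (Fin 6) = 6 := by simp [Nat.card_eq_fintype_card]
  rw [h6] at h
  omega

noncomputable def stdPhi : Equiv.Perm (Fin 5) →* Equiv.Perm (Fin 6) :=
  Equiv.Perm.viaEmbeddingHom (Fin.castLEEmb (by omega))

lemma stdPhi_range : stdPhi.range = MulAction.stabilizer (Equiv.Perm (Fin 6)) (5 : Fin 6) := by
  have hle : stdPhi.range ≤ MulAction.stabilizer (Equiv.Perm (Fin 6)) (5 : Fin 6) := by
    rintro - ⟨g, rfl⟩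
    have h5 : (5 : Fin 6) ∉ Set.range (Fin.castLEEmb (show 5 ≤ 6 by omega)) := by
      rintro ⟨x, hx⟩
      have := congrArg Fin.val hx
      simp [Fin.castLE] at this
      omega
    have := Equiv.Perm.viaEmbedding_apply_of_notMem g (Fin.castLEEmb (by omega)) _ h5
    rw [MulAction.mem_stabilizer_iff]
    simpa [stdPhi, Equiv.Perm.viaEmbeddingHom_apply, Equiv.Perm.smul_def] using this
  refine Subgroup.eq_of_le_of_card_ge hle ?_
  rw [card_stab]
  have : Nat.card stdPhi.range = 120 := by
    rw [← card_perm5]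
    exact (Nat.card_congr (MonoidHom.ofInjective
      (Equiv.Perm.viaEmbeddingHom_injective (Fin.castLEEmb (by omega)))).toEquiv).symm
  omega

/-! ### The dichotomy for subgroups isomorphic to `S₅`. -/

lemma perm_range_iso {φ : Equiv.Perm (Fin 5) →* Equiv.Perm (Fin 6)}
    (h : Function.Injective φ) : Nonempty (φ.range ≃* Equiv.Perm (Fin 5)) :=
  ⟨(MonoidHom.ofInjective h).symm⟩

/-- Every subgroup `H` of the symmetric group `S₆` that is isomorphic (as an abstract
group) to the symmetric group `S₅` either is the full stabilizer of a point of
`{1, …, 6}` (in particular it fixes that point), or acts transitively on `{1, …, 6}`;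
moreover both cases occur: there is a point-stabilizer subgroup isomorphic to `S₅`, and
there is a transitive subgroup of `S₆` isomorphic to `S₅`. -/
theorem stmt5 :
    (∀ H : Subgroup (Equiv.Perm (Fin 6)), Nonempty (H ≃* Equiv.Perm (Fin 5)) →
      (∃ a : Fin 6, H = MulAction.stabilizer (Equiv.Perm (Fin 6)) a) ∨
      (∀ a b : Fin 6, ∃ h ∈ H, h a = b)) ∧
    (∃ H : Subgroup (Equiv.Perm (Fin 6)), Nonempty (H ≃* Equiv.Perm (Fin 5)) ∧
      ∃ a : Fin 6, H = MulAction.stabilizer (Equiv.Perm (Fin 6)) a) ∧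
    (∃ H : Subgroup (Equiv.Perm (Fin 6)), Nonempty (H ≃* Equiv.Perm (Fin 5)) ∧
      ∀ a b : Fin 6, ∃ h ∈ H, h a = b) := by
  refine ⟨?_, ?_, ?_⟩
  · intro H ⟨iso⟩
    have cardH : Nat.card H = 120 := by
      rw [Nat.card_congr iso.toEquiv, card_perm5]
    by_cases hfix : ∃ a : Fin 6, ∀ h ∈ H, h a = a
    · obtain ⟨a, ha⟩ := hfix
      left
      refine ⟨a, Subgroup.eq_of_le_of_card_ge ?_ ?_⟩
      · intro h hh
        rw [MulAction.mem_stabilizer_iff, Equiv.Perm.smul_def]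
        exact ha h hh
      · rw [card_stab, cardH]
    · right
      by_contra htrans
      push_neg at htrans
      obtain ⟨a, b, hab⟩ := htrans
      set O : Set (Fin 6) := MulAction.orbit H a with hO
      have haO : a ∈ O := MulAction.mem_orbit_self a
      have hbO : b ∉ O := by
        rintro ⟨u, hu⟩
        exact hab u u.2 hu
      have hinv : ∀ g ∈ H, ∀ x : Fin 6, x ∈ O ↔ g x ∈ O := by
        have fwd : ∀ g ∈ H, ∀ x : Fin 6, x ∈ O → g x ∈ O := by
          rintro g hg x ⟨u, hu⟩
          exact ⟨⟨g, hg⟩ * u, by simp [mul_smul, hu, Equiv.Perm.smul_def]⟩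
        intro g hg x
        refine ⟨fwd g hg x, fun hx => ?_⟩
        have := fwd g⁻¹ (H.inv_mem hg) (g x) hx
        simpa using this
      letI : Fintype O := Fintype.ofFinite _
      letI : Fintype ↥(Oᶜ) := Fintype.ofFinite _
      have hklt : Fintype.card O < 6 := by
        have hss : O ⊂ Set.univ := (Set.ssubset_univ_iff).mpr
          (fun h => hbO (h ▸ Set.mem_univ b))
        have := Set.ncard_lt_ncard hss (Set.toFinite _)
        rwa [Set.ncard_univ, Nat.card_eq_fintype_card, Fintype.card_fin,
          Set.ncard_eq_toFinset_card', Set.toFinset_card] at this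
      have hkpos : 0 < Fintype.card O := Fintype.card_pos_iff.mpr ⟨⟨a, haO⟩⟩
      -- the injection into `Perm O × Perm Oᶜ`
      have hcard_le : Nat.card H ≤
          (Fintype.card O).factorial * (6 - Fintype.card O).factorial := by
        have hinj : Function.Injective (fun h : H =>
            (⟨(h : Equiv.Perm (Fin 6)).subtypePerm (fun x => (hinv h h.2 x).symm),
              (h : Equiv.Perm (Fin 6)).subtypePerm
                (fun x => not_congr (hinv h h.2 x).symm)⟩ :
             Equiv.Perm O × Equiv.Perm ↥(Oᶜ))) := by
          intro h1 h2 heq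
          have heq1 := congrArg Prod.fst heq
          have heq2 := congrArg Prod.snd heq
          simp only at heq1 heq2
          apply Subtype.ext
          apply Equiv.ext
          intro x
          by_cases hx : x ∈ O
          · have := Subtype.ext_iff.mp (Equiv.ext_iff.mp heq1 ⟨x, hx⟩)
            simpa [Equiv.Perm.subtypePerm_apply] using this
          · have := Subtype.ext_iff.mp (Equiv.ext_iff.mp heq2 ⟨x, hx⟩)
            simpa [Equiv.Perm.subtypePerm_apply] using this
        have hle := Nat.card_le_card_of_injective _ hinj
        calc Nat.card H ≤ Nat.card (Equiv.Perm O × Equiv.Perm ↥(Oᶜ)) := hle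
          _ = (Fintype.card O).factorial * (6 - Fintype.card O).factorial := by
              rw [Nat.card_eq_fintype_card, Fintype.card_prod, Fintype.card_perm,
                Fintype.card_perm, Fintype.card_compl_set, Fintype.card_fin]
      -- rule out k = 1 and k = 5 : they give a fixed point
      have hfix' : ∀ (S : Set (Fin 6)), (∀ g ∈ H, ∀ x, x ∈ S ↔ g x ∈ S) →
          ∀ c ∈ S, (∀ x ∈ S, x = c) → False := by
        intro S hSinv c hc huniq
        exact hfix ⟨c, fun h hh => huniq _ ((hSinv h hh c).mp hc)⟩
      have hk1 : Fintype.card O ≠ 1 := by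
        intro h1
        refine hfix' O hinv a haO (fun x hx => ?_)
        have := Fintype.card_le_one_iff.mp (le_of_eq h1)
        exact Subtype.ext_iff.mp (this ⟨x, hx⟩ ⟨a, haO⟩)
      have hk5 : Fintype.card O ≠ 5 := by
        intro h5
        have hcc : Fintype.card ↥(Oᶜ) = 1 := by
          rw [Fintype.card_compl_set, Fintype.card_fin, h5]
        obtain ⟨⟨c, hc⟩⟩ := Fintype.card_pos_iff.mp (by omega : 0 < Fintype.card ↥(Oᶜ))
        refine hfix' Oᶜ (fun g hg x => not_congr (hinv g hg x)) c hc (fun x hx => ?_)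
        have := Fintype.card_le_one_iff.mp (le_of_eq hcc)
        exact Subtype.ext_iff.mp (this ⟨x, hx⟩ ⟨c, hc⟩)
      rw [cardH] at hcard_le
      have hk234 : Fintype.card O = 2 ∨ Fintype.card O = 3 ∨ Fintype.card O = 4 := by
        omega
      rcases hk234 with h | h | h <;> rw [h] at hcard_le <;>
        norm_num [Nat.factorial] at hcard_le
  · exact ⟨MulAction.stabilizer (Equiv.Perm (Fin 6)) (5 : Fin 6),
      stdPhi_range ▸ perm_range_iso (Equiv.Perm.viaEmbeddingHom_injective _),
      ⟨5, rfl⟩⟩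
  · exact ⟨exoPhi.range, perm_range_iso exoPhi_injective, exoPhi_transitive⟩
end

section
/- The symmetric group S₆ has an outer automorphism: there exists a group automorphism φ of S₆ such that for no element g of S₆ is φ equal to conjugation by g. -/
set_option maxRecDepth 20000
set_option maxHeartbeats 2000000

open Equiv

private def totals : Fin 6 → Finset (Equiv.Perm (Fin 6))
  | 0 => {Equiv.swap 0 1 * Equiv.swap 2 3 * Equiv.swap 4 5, Equiv.swap 0 2 * Equiv.swap 1 4 * Equiv.swap 3 5, Equiv.swap 0 3 * Equiv.swap 1 5 * Equiv.swap 2 4, Equiv.swap 0 4 * Equiv.swap 1 3 * Equiv.swap 2 5, Equiv.swap 0 5 * Equiv.swap 1 2 * Equiv.swap 3 4}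
  | 1 => {Equiv.swap 0 1 * Equiv.swap 2 3 * Equiv.swap 4 5, Equiv.swap 0 2 * Equiv.swap 1 5 * Equiv.swap 3 4, Equiv.swap 0 3 * Equiv.swap 1 4 * Equiv.swap 2 5, Equiv.swap 0 4 * Equiv.swap 1 2 * Equiv.swap 3 5, Equiv.swap 0 5 * Equiv.swap 1 3 * Equiv.swap 2 4}
  | 2 => {Equiv.swap 0 1 * Equiv.swap 2 4 * Equiv.swap 3 5, Equiv.swap 0 2 * Equiv.swap 1 3 * Equiv.swap 4 5, Equiv.swap 0 3 * Equiv.swap 1 4 * Equiv.swap 2 5, Equiv.swap 0 4 * Equiv.swap 1 5 * Equiv.swap 2 3, Equiv.swap 0 5 * Equiv.swap 1 2 * Equiv.swap 3 4}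
  | 3 => {Equiv.swap 0 1 * Equiv.swap 2 4 * Equiv.swap 3 5, Equiv.swap 0 2 * Equiv.swap 1 5 * Equiv.swap 3 4, Equiv.swap 0 3 * Equiv.swap 1 2 * Equiv.swap 4 5, Equiv.swap 0 4 * Equiv.swap 1 3 * Equiv.swap 2 5, Equiv.swap 0 5 * Equiv.swap 1 4 * Equiv.swap 2 3}
  | 4 => {Equiv.swap 0 1 * Equiv.swap 2 5 * Equiv.swap 3 4, Equiv.swap 0 2 * Equiv.swap 1 3 * Equiv.swap 4 5, Equiv.swap 0 3 * Equiv.swap 1 5 * Equiv.swap 2 4, Equiv.swap 0 4 * Equiv.swap 1 2 * Equiv.swap 3 5, Equiv.swap 0 5 * Equiv.swap 1 4 * Equiv.swap 2 3}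
  | 5 => {Equiv.swap 0 1 * Equiv.swap 2 5 * Equiv.swap 3 4, Equiv.swap 0 2 * Equiv.swap 1 4 * Equiv.swap 3 5, Equiv.swap 0 3 * Equiv.swap 1 2 * Equiv.swap 4 5, Equiv.swap 0 4 * Equiv.swap 1 5 * Equiv.swap 2 3, Equiv.swap 0 5 * Equiv.swap 1 3 * Equiv.swap 2 4}

private def act (σ : Equiv.Perm (Fin 6)) (t : Finset (Equiv.Perm (Fin 6))) :
    Finset (Equiv.Perm (Fin 6)) :=
  t.image (fun τ => σ * τ * σ⁻¹)

private lemma act_mul (σ τ : Equiv.Perm (Fin 6)) (t : Finset (Equiv.Perm (Fin 6))) :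
    act (σ * τ) t = act σ (act τ t) := by
  simp only [act, Finset.image_image]
  apply Finset.image_congr
  intro x _
  simp [mul_assoc, mul_inv_rev]

private lemma act_one (t : Finset (Equiv.Perm (Fin 6))) : act 1 t = t := by
  simp [act]

private lemma totals_inj : ∀ i j : Fin 6, totals i = totals j → i = j := by decide

private lemma act_swap : ∀ x y i : Fin 6, ∃ j, act (Equiv.swap x y) (totals i) = totals j := by
  decide

private lemma exT (σ : Equiv.Perm (Fin 6)) (i : Fin 6) : ∃ j, act σ (totals i) = totals j := by
  refine Equiv.Perm.swap_induction_on
    (motive := fun σ => ∀ i, ∃ j, act σ (totals i) = totals j) σ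
    (fun i => ⟨i, act_one _⟩) (fun f x y _ hf i => ?_) i
  obtain ⟨j, hj⟩ := hf i
  obtain ⟨j', hj'⟩ := act_swap x y j
  exact ⟨j', by rw [act_mul, hj, hj']⟩

private lemma exuT (σ : Equiv.Perm (Fin 6)) (i : Fin 6) :
    ∃! j, act σ (totals i) = totals j := by
  obtain ⟨j, hj⟩ := exT σ i
  exact ⟨j, hj, fun k hk => totals_inj _ _ (hk.symm.trans hj)⟩

private def φfun (σ : Equiv.Perm (Fin 6)) (i : Fin 6) : Fin 6 :=
  Fintype.choose _ (exuT σ i)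

private lemma φfun_spec (σ : Equiv.Perm (Fin 6)) (i : Fin 6) :
    act σ (totals i) = totals (φfun σ i) :=
  Fintype.choose_spec _ (exuT σ i)

private lemma φfun_mul (σ τ : Equiv.Perm (Fin 6)) (i : Fin 6) :
    φfun (σ * τ) i = φfun σ (φfun τ i) := by
  apply totals_inj
  rw [← φfun_spec, ← φfun_spec, act_mul, φfun_spec τ i]

private lemma φfun_one (i : Fin 6) : φfun 1 i = i := by
  apply totals_inj
  rw [← φfun_spec, act_one]

private lemma φfun_inv_left (σ : Equiv.Perm (Fin 6)) (i : Fin 6) :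
    φfun σ⁻¹ (φfun σ i) = i := by
  rw [← φfun_mul, inv_mul_cancel, φfun_one]

private def φperm (σ : Equiv.Perm (Fin 6)) : Equiv.Perm (Fin 6) :=
  ⟨φfun σ, φfun σ⁻¹, φfun_inv_left σ, by
    intro i
    have := φfun_inv_left σ⁻¹ i
    rwa [inv_inv] at this⟩

/-- Uniqueness of intersection of two distinct totals. -/
private lemma totals_inter : ∀ i j : Fin 6, i ≠ j → ((totals i) ∩ (totals j)).card ≤ 1 := by
  decide

/-- the synthemes of totals 0, indexed so that `syn j` sends `0` to `j`. -/
private def syn : Fin 6 → Equiv.Perm (Fin 6)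
  | 0 => 1
  | 1 => Equiv.swap 0 1 * Equiv.swap 2 3 * Equiv.swap 4 5
  | 2 => Equiv.swap 0 2 * Equiv.swap 1 4 * Equiv.swap 3 5
  | 3 => Equiv.swap 0 3 * Equiv.swap 1 5 * Equiv.swap 2 4
  | 4 => Equiv.swap 0 4 * Equiv.swap 1 3 * Equiv.swap 2 5
  | 5 => Equiv.swap 0 5 * Equiv.swap 1 2 * Equiv.swap 3 4

private def bsyn : Equiv.Perm (Fin 6) := Equiv.swap 0 1 * Equiv.swap 2 4 * Equiv.swap 3 5

private lemma syn_mem : ∀ j : Fin 6, j ≠ 0 →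
    ∃ a b : Fin 6, a ≠ b ∧ syn j ∈ totals a ∧ syn j ∈ totals b := by decide

private lemma bsyn_mem : bsyn ∈ totals 2 ∧ bsyn ∈ totals 3 := by decide

private lemma syn_zero : ∀ j : Fin 6, syn j 0 = j := by decide

private lemma syn_id : ∀ x : Fin 6, syn x 0 = x := syn_zero

private lemma key_decide : ∀ k : Fin 6, (∀ x, syn (bsyn x) k = bsyn (syn x k)) → k = 0 := by
  decide

private lemma faithful (σ : Equiv.Perm (Fin 6)) (hσ : ∀ i, act σ (totals i) = totals i) :
    σ = 1 := by
  -- σ commutes with any syntheme lying in two distinct totals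
  have comm : ∀ (a b : Fin 6), a ≠ b → ∀ τ, τ ∈ totals a → τ ∈ totals b →
      ∀ x, σ (τ x) = τ (σ x) := by
    intro a b hab τ ha hb x
    have h1 : σ * τ * σ⁻¹ ∈ totals a := by
      rw [← hσ a]; exact Finset.mem_image_of_mem _ ha
    have h2 : σ * τ * σ⁻¹ ∈ totals b := by
      rw [← hσ b]; exact Finset.mem_image_of_mem _ hb
    have heq : σ * τ * σ⁻¹ = τ :=
      Finset.card_le_one.mp (totals_inter a b hab) _ (Finset.mem_inter.mpr ⟨h1, h2⟩)
        _ (Finset.mem_inter.mpr ⟨ha, hb⟩)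
    have : σ * τ = τ * σ := by
      have := congrArg (fun p => p * σ) heq
      simpa [mul_assoc] using this
    calc σ (τ x) = (σ * τ) x := rfl
      _ = (τ * σ) x := by rw [this]
      _ = τ (σ x) := rfl
  have commsyn : ∀ j : Fin 6, ∀ x, σ (syn j x) = syn j (σ x) := by
    intro j x
    by_cases hj : j = 0
    · subst hj; rfl
    · obtain ⟨a, b, hab, ha, hb⟩ := syn_mem j hj
      exact comm a b hab _ ha hb x
  have commb : ∀ x, σ (bsyn x) = bsyn (σ x) := by
    intro x
    exact comm 2 3 (by decide) _ bsyn_mem.1 bsyn_mem.2 x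
  have hval : ∀ x : Fin 6, σ x = syn x (σ 0) := by
    intro x
    conv_lhs => rw [← syn_zero x]
    exact commsyn x 0
  have hk : σ 0 = 0 := by
    apply key_decide
    intro x
    rw [← hval (bsyn x), ← hval x, commb]
  ext x
  rw [hval x, hk, syn_id]
  rfl

private lemma φperm_inj : Function.Injective φperm := by
  intro σ τ h
  have h' : ∀ i, φfun σ i = φfun τ i := fun i => congrFun (congrArg (fun e => e.toFun) h) i
  have hfix : ∀ i, act (τ⁻¹ * σ) (totals i) = totals i := by
    intro i
    rw [act_mul, φfun_spec σ i, h' i, ← φfun_spec τ i, ← act_mul, inv_mul_cancel, act_one]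
  have := faithful _ hfix
  have := congrArg (fun p => τ * p) this
  simpa using this

private lemma swap01_moves : ∀ i : Fin 6, act (Equiv.swap 0 1) (totals i) ≠ totals i := by
  decide

/-- The symmetric group `S₆` has an outer automorphism: there is a group automorphism
`φ` of `S₆` which is not equal to conjugation by any element `g` of `S₆`. -/
theorem stmt6 :
    ∃ φ : MulAut (Equiv.Perm (Fin 6)), ∀ g : Equiv.Perm (Fin 6), φ ≠ MulAut.conj g := by
  have hbij : Function.Bijective φperm := Finite.injective_iff_bijective.mp φperm_inj
  refine ⟨MulEquiv.mk (Equiv.ofBijective φperm hbij) ?_, ?_⟩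
  · intro σ τ
    have h : φperm (σ * τ) = φperm σ * φperm τ :=
      Equiv.ext fun i => φfun_mul σ τ i
    exact h
  · intro g hφ
    -- evaluate both automorphisms on `swap 0 1`, then at the point `g 2`
    have h := congrArg (fun ψ : MulAut (Equiv.Perm (Fin 6)) => ψ (Equiv.swap 0 1) (g 2)) hφ
    have hR : (MulAut.conj g (Equiv.swap 0 1)) (g 2) = g 2 := by
      rw [MulAut.conj_apply]
      simp only [Equiv.Perm.mul_apply, Equiv.Perm.inv_def, Equiv.symm_apply_apply]
      rw [Equiv.swap_apply_of_ne_of_ne (by decide) (by decide)]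
    have hL : φperm (Equiv.swap 0 1) (g 2) ≠ g 2 := by
      intro hfix
      have : totals (g 2) = act (Equiv.swap 0 1) (totals (g 2)) := by
        rw [φfun_spec]
        show totals (g 2) = totals (φperm (Equiv.swap 0 1) (g 2))
        rw [hfix]
      exact swap01_moves (g 2) this.symm
    exact hL (h.trans hR)
end

section
/- There exists an injective group homomorphism from the alternating group A₅ into the symplectic group Sp₄(F₂) of 4×4 matrices over the field with two elements preserving the standard nondegenerate alternating bilinear form. -/
private def Bv : Fin 2 ⊕ Fin 2 → Fin 5 → ZMod 2 :=
  Sum.elim ![![1,1,0,0,0], ![0,0,0,1,1]] ![![0,1,1,0,0], ![1,1,1,1,0]]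

private def swp : Fin 2 ⊕ Fin 2 → Fin 2 ⊕ Fin 2 := Sum.elim Sum.inr Sum.inl

private lemma bv_sum : ∀ p, ∑ i, Bv p i = 0 := by decide

private lemma bv_complete' : ∀ a b : Fin 5,
    (∑ q, Bv q a * Bv (swp q) b) = 1 + (if a = b then 1 else 0) := by decide

/-- completeness identity -/
private lemma complete (x y : Fin 5 → ZMod 2) (hy : ∑ j, y j = 0) :
    ∑ q, (∑ a, x a * Bv q a) * (∑ b, Bv (swp q) b * y b) = ∑ a, x a * y a := by
  have h1 : ∀ q : Fin 2 ⊕ Fin 2,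
      (∑ a, x a * Bv q a) * (∑ b, Bv (swp q) b * y b)
        = ∑ a, ∑ b, x a * y b * (Bv q a * Bv (swp q) b) := by
    intro q
    rw [Finset.sum_mul_sum]
    exact Finset.sum_congr rfl fun a _ => Finset.sum_congr rfl fun b _ => by ring
  calc ∑ q, (∑ a, x a * Bv q a) * (∑ b, Bv (swp q) b * y b)
      = ∑ q, ∑ a, ∑ b, x a * y b * (Bv q a * Bv (swp q) b) := Finset.sum_congr rfl fun q _ => h1 q
    _ = ∑ a, ∑ b, x a * y b * (∑ q, Bv q a * Bv (swp q) b) := by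
        rw [Finset.sum_comm]
        exact Finset.sum_congr rfl fun a _ => by
          rw [Finset.sum_comm]
          exact Finset.sum_congr rfl fun b _ => (Finset.mul_sum _ _ _).symm
    _ = ∑ a, x a * y a := by
        simp only [bv_complete', mul_add, mul_ite, mul_one, mul_zero,
          Finset.sum_add_distrib, Finset.sum_ite_eq', Finset.mem_univ, if_true,
          ← Finset.mul_sum, hy]
        simp

private def matOf (σ : Equiv.Perm (Fin 5)) :
    Matrix (Fin 2 ⊕ Fin 2) (Fin 2 ⊕ Fin 2) (ZMod 2) :=
  Matrix.of fun p q => ∑ i, Bv (swp p) i * Bv q (σ⁻¹ i)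

/-- reindexing: `∑ i, u i * v (σ⁻¹ i) = ∑ i, u (σ i) * v i` -/
private lemma dot_perm (σ : Equiv.Perm (Fin 5)) (u v : Fin 5 → ZMod 2) :
    ∑ i, u i * v (σ⁻¹ i) = ∑ i, u (σ i) * v i := by
  rw [← Equiv.sum_comp σ (fun i => u i * v (σ⁻¹ i))]
  simp

private lemma sum_perm (σ : Equiv.Perm (Fin 5)) (u : Fin 5 → ZMod 2) :
    ∑ i, u (σ i) = ∑ i, u i := Equiv.sum_comp σ u

private lemma matOf_mul (σ τ : Equiv.Perm (Fin 5)) :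
    matOf (σ * τ) = matOf σ * matOf τ := by
  ext p r
  show matOf (σ * τ) p r = ∑ q, matOf σ p q * matOf τ q r
  symm
  have h1 : ∀ q, matOf σ p q = ∑ a, Bv (swp p) (σ a) * Bv q a := fun q => dot_perm σ _ _
  have h2 : ∀ q, matOf τ q r = ∑ b, Bv (swp q) b * Bv r (τ⁻¹ b) := fun q => rfl
  calc ∑ q, matOf σ p q * matOf τ q r
      = ∑ q, (∑ a, (fun a => Bv (swp p) (σ a)) a * Bv q a)
          * (∑ b, Bv (swp q) b * (fun b => Bv r (τ⁻¹ b)) b) := by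
        simp only [h1, h2]
    _ = ∑ a, Bv (swp p) (σ a) * Bv r (τ⁻¹ a) := by
        refine complete _ _ ?_
        rw [sum_perm τ⁻¹ (Bv r)]; exact bv_sum r
    _ = matOf (σ * τ) p r := by
        rw [← dot_perm σ]
        show _ = ∑ i, Bv (swp p) i * Bv r ((σ * τ)⁻¹ i)
        simp [Equiv.Perm.mul_apply, mul_inv_rev]

private lemma jfact : ∀ r s, Matrix.J (Fin 2) (ZMod 2) r s = if swp r = s then 1 else 0 := by
  intro r s; rcases r with r|r <;> rcases s with s|s <;> fin_cases r <;> fin_cases s <;> decide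

private lemma jswp : ∀ p q, Matrix.J (Fin 2) (ZMod 2) (swp p) (swp q)
    = Matrix.J (Fin 2) (ZMod 2) p q := by
  intro r s; rcases r with r|r <;> rcases s with s|s <;> fin_cases r <;> fin_cases s <;> decide

private lemma gram : ∀ p q, (∑ i, Bv p i * Bv q i) = Matrix.J (Fin 2) (ZMod 2) p q := by
  intro r s; rcases r with r|r <;> rcases s with s|s <;> fin_cases r <;> fin_cases s <;> decide

private lemma swp_invol : ∀ p, swp (swp p) = p := by decide

private lemma matOf_mem (σ : Equiv.Perm (Fin 5)) :
    matOf σ ∈ Matrix.symplecticGroup (Fin 2) (ZMod 2) := by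
  rw [SymplecticGroup.mem_iff]
  ext p q
  have hAJ : ∀ s, (matOf σ * Matrix.J (Fin 2) (ZMod 2)) p s = matOf σ p (swp s) := by
    intro s
    rw [Matrix.mul_apply]
    have : ∀ r, matOf σ p r * Matrix.J (Fin 2) (ZMod 2) r s
        = if r = swp s then matOf σ p r else 0 := by
      intro r
      rw [jfact]
      rcases eq_or_ne r (swp s) with h | h
      · subst h; simp [swp_invol]
      · have : swp r ≠ s := fun hh => h (by rw [← hh, swp_invol])
        simp [this, h]
    simp only [this, Finset.sum_ite_eq', Finset.mem_univ, if_true]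
  show (matOf σ * Matrix.J (Fin 2) (ZMod 2) * Matrix.transpose (matOf σ)) p q = _
  rw [Matrix.mul_apply]
  simp only [Matrix.transpose_apply, hAJ]
  calc ∑ s, matOf σ p (swp s) * matOf σ q s
      = ∑ s, matOf σ p s * matOf σ q (swp s) := by
        rw [← Equiv.sum_comp (Function.Involutive.toPerm swp swp_invol)
          (fun s => matOf σ p (swp s) * matOf σ q s)]
        exact Finset.sum_congr rfl fun s _ => by
          show matOf σ p (swp (swp s)) * matOf σ q (swp s) = _
          rw [swp_invol]
    _ = ∑ s, (∑ a, (fun a => Bv (swp p) (σ a)) a * Bv s a)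
          * (∑ b, Bv (swp s) b * (fun b => Bv (swp q) (σ b)) b) := by
        refine Finset.sum_congr rfl fun s _ => ?_
        have h1 : matOf σ p s = ∑ a, Bv (swp p) (σ a) * Bv s a := dot_perm σ _ _
        have h2 : matOf σ q (swp s) = ∑ b, Bv (swp q) (σ b) * Bv (swp s) b := dot_perm σ _ _
        rw [h1, h2]
        congr 1
        exact Finset.sum_congr rfl fun b _ => mul_comm _ _
    _ = ∑ a, Bv (swp p) (σ a) * Bv (swp q) (σ a) := complete _ _ (by
        rw [sum_perm σ (Bv (swp q))]; exact bv_sum _)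
    _ = Matrix.J (Fin 2) (ZMod 2) p q := by
        rw [sum_perm σ (fun i => Bv (swp p) i * Bv (swp q) i), gram, jswp]

private lemma matOf_one : matOf 1 = 1 := by decide

private lemma nondeg : ∀ z : Fin 5 → ZMod 2, (∑ i, z i) = 0 →
    (∀ p, (∑ i, Bv p i * z i) = 0) → z = 0 := by decide

private lemma col_inj : ∀ a b : Fin 5, (∀ q, Bv q a = Bv q b) → a = b := by decide

private lemma matOf_inj (σ : Equiv.Perm (Fin 5)) (h : matOf σ = 1) : σ = 1 := by
  have hfix : ∀ q, (fun i => Bv q (σ⁻¹ i)) = Bv q := by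
    intro q
    have key : ∀ p, (∑ i, Bv p i * Bv q (σ⁻¹ i)) = ∑ i, Bv p i * Bv q i := by
      intro p
      have h1 : (∑ i, Bv (swp (swp p)) i * Bv q (σ⁻¹ i)) = matOf σ (swp p) q := rfl
      rw [swp_invol] at h1
      have h3 : (∑ i, Bv p i * Bv q i) = matOf σ (swp p) q := by
        rw [h, gram, jfact, Matrix.one_apply]
      rw [h1, h3]
    have hz : (fun i => Bv q (σ⁻¹ i) - Bv q i) = 0 := by
      refine nondeg _ ?_ ?_
      · rw [Finset.sum_sub_distrib, sum_perm σ⁻¹ (Bv q)]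
        exact sub_self _
      · intro p
        simp only [mul_sub, Finset.sum_sub_distrib, key p, sub_self]
    funext i
    have := congrFun hz i
    simpa [sub_eq_zero] using this
  refine Equiv.ext fun i => ?_
  rw [Equiv.Perm.one_apply]
  have hcol : ∀ q, Bv q (σ⁻¹ i) = Bv q i := fun q => congrFun (hfix q) i
  have h5 : σ⁻¹ i = i := col_inj _ _ hcol
  show σ i = i
  conv_lhs => rw [← h5]
  exact σ.apply_symm_apply i

/-- There is an injective group homomorphism from the alternating group `A₅` into the
symplectic group `Sp₄(𝔽₂)` of `4 × 4` matrices over the field with two elements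
preserving the standard nondegenerate alternating bilinear form. -/
theorem stmt12 :
    ∃ f : alternatingGroup (Fin 5) →* Matrix.symplecticGroup (Fin 2) (ZMod 2),
      Function.Injective f := by
  refine ⟨{ toFun := fun σ => ⟨matOf σ.1, matOf_mem σ.1⟩
            map_one' := Subtype.ext matOf_one
            map_mul' := fun σ τ => Subtype.ext (matOf_mul σ.1 τ.1) }, ?_⟩
  rw [injective_iff_map_eq_one]
  intro a ha
  have h1 : matOf a.1 = 1 := congrArg Subtype.val ha
  exact Subtype.ext (matOf_inj a.1 h1)
end
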